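/- With g, ι as above, define (u|u') = ι(uu') ∈ U(g₀). Then for every subset J of the index set I of the ordered basis of g₁, there exist elements u_J, v_J ∈ U(g) such that (u_J | x_{J'}) = δ_{J,J'} and (x_{J'} | v_J) = δ_{J,J'} for all J' ⊆ I. -/

import Mathlib

noncomputable section
set_option linter.unusedSectionVars false
set_option linter.unnecessarySimpa false
set_option linter.unusedVariables false
set_option maxHeartbeats 1000000

/-- Ordered product `x_J` of odd basis elements indexed by a finite set `J`. -/
def xprod {U : Type*} [Ring U] {I : Type*} [LinearOrder I] (x : I → U) (J : Finset I) : U :=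
  ((J.sort (· ≤ ·)).map x).prod

/-- The even enveloping subalgebra `U(g₀)` realized inside `U = U(g)`. -/
def evenEnv {U : Type*} [Ring U] [Algebra ℂ U] (g0 : Submodule ℂ U) : Subalgebra ℂ U :=
  Algebra.adjoin ℂ (g0 : Set U)

/-- The odd filtration `F_o^k = Σ_{|J| ≤ k} U(g₀)·x_J`. -/
def oddFil {U : Type*} [Ring U] [Algebra ℂ U] {I : Type*} [LinearOrder I]
    (g0 : Submodule ℂ U) (x : I → U) (k : ℕ) : Submodule ℂ U :=
  Submodule.span ℂ
    {z | ∃ u0 ∈ evenEnv g0, ∃ J : Finset I, J.card ≤ k ∧ z = u0 * xprod x J}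

section Aux

variable {U : Type*} [Ring U] [Algebra ℂ U] {I : Type*} [LinearOrder I]

lemma xprod_empty (x : I → U) : xprod x (∅ : Finset I) = 1 := by simp [xprod]

lemma xprod_insert (x : I → U) {i : I} {J : Finset I} (h1 : ∀ j ∈ J, i ≤ j) (h2 : i ∉ J) :
    xprod x (insert i J) = x i * xprod x J := by
  rw [xprod, Finset.sort_insert _ h1 h2]
  simp [xprod]

lemma xprod_peel (x : I → U) {J : Finset I} (hJ : J.Nonempty) :
    xprod x J = x (J.min' hJ) * xprod x (J.erase (J.min' hJ)) := by
  conv_lhs => rw [← Finset.insert_erase (J.min'_mem hJ)]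
  exact xprod_insert x (fun j hj => J.min'_le j (Finset.mem_of_mem_erase hj))
    (Finset.notMem_erase _ _)

lemma g0_mem_evenEnv {g0 : Submodule ℂ U} {a : U} (ha : a ∈ g0) : a ∈ evenEnv g0 :=
  Algebra.subset_adjoin ha

lemma oddFil_mono (g0 : Submodule ℂ U) (x : I → U) {k l : ℕ} (h : k ≤ l) :
    oddFil g0 x k ≤ oddFil g0 x l :=
  Submodule.span_mono (by rintro z ⟨u0, hu0, J, hJ, rfl⟩; exact ⟨u0, hu0, J, hJ.trans h, rfl⟩)

lemma mul_xprod_mem_oddFil (g0 : Submodule ℂ U) (x : I → U) {u0 : U} (hu0 : u0 ∈ evenEnv g0)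
    {J : Finset I} {k : ℕ} (h : J.card ≤ k) : u0 * xprod x J ∈ oddFil g0 x k :=
  Submodule.subset_span ⟨u0, hu0, J, h, rfl⟩

lemma xprod_mem_oddFil (g0 : Submodule ℂ U) (x : I → U) {J : Finset I} {k : ℕ}
    (h : J.card ≤ k) : xprod x J ∈ oddFil g0 x k := by
  simpa using mul_xprod_mem_oddFil g0 x (one_mem _) h

lemma even_mem_oddFil (g0 : Submodule ℂ U) (x : I → U) {u0 : U} (hu0 : u0 ∈ evenEnv g0)
    (k : ℕ) : u0 ∈ oddFil g0 x k := by
  simpa [xprod_empty] using mul_xprod_mem_oddFil g0 x hu0 (J := ∅) (by simp)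

lemma even_mul_oddFil (g0 : Submodule ℂ U) (x : I → U) {u0 : U} (hu0 : u0 ∈ evenEnv g0)
    {k : ℕ} {z : U} (hz : z ∈ oddFil g0 x k) : u0 * z ∈ oddFil g0 x k := by
  induction hz using Submodule.span_induction with
  | mem z hz =>
    obtain ⟨u0', hu0', J, hJ, rfl⟩ := hz
    rw [← mul_assoc]
    exact mul_xprod_mem_oddFil g0 x (mul_mem hu0 hu0') hJ
  | zero => simpa using zero_mem _
  | add a b _ _ ha hb => rw [mul_add]; exact add_mem ha hb
  | smul c a _ ha => rw [mul_smul_comm]; exact Submodule.smul_mem _ _ ha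

/-- span of elements `u0 * y` with `u0` even, `y ∈ g1`. -/
def oddRight (g0 g1 : Submodule ℂ U) : Submodule ℂ U :=
  Submodule.span ℂ {z | ∃ u0 ∈ evenEnv g0, ∃ y ∈ g1, z = u0 * y}

lemma g1_le_oddRight (g0 g1 : Submodule ℂ U) : g1 ≤ oddRight g0 g1 := by
  intro y hy
  exact Submodule.subset_span ⟨1, one_mem _, y, hy, (one_mul y).symm⟩

lemma even_mul_oddRight (g0 g1 : Submodule ℂ U) {v : U} (hv : v ∈ evenEnv g0) {z : U}
    (hz : z ∈ oddRight g0 g1) : v * z ∈ oddRight g0 g1 := by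
  induction hz using Submodule.span_induction with
  | mem z hz =>
    obtain ⟨u0', hu0', y, hy, rfl⟩ := hz
    rw [← mul_assoc]
    exact Submodule.subset_span ⟨v * u0', mul_mem hv hu0', y, hy, rfl⟩
  | zero => simpa using zero_mem _
  | add a b _ _ ha hb => rw [mul_add]; exact add_mem ha hb
  | smul c a _ ha => rw [mul_smul_comm]; exact Submodule.smul_mem _ _ ha

lemma odd_mul_even (g0 g1 : Submodule ℂ U)
    (h01 : ∀ a ∈ g0, ∀ b ∈ g1, a * b - b * a ∈ g1)
    {u0 : U} (hu0 : u0 ∈ evenEnv g0) : ∀ y ∈ g1, y * u0 ∈ oddRight g0 g1 := by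
  induction hu0 using Algebra.adjoin_induction with
  | mem a ha =>
    intro y hy
    have h1 : a * y ∈ oddRight g0 g1 :=
      Submodule.subset_span ⟨a, g0_mem_evenEnv ha, y, hy, rfl⟩
    have h2 : a * y - y * a ∈ oddRight g0 g1 := g1_le_oddRight g0 g1 (h01 a ha y hy)
    rw [show y * a = a * y - (a * y - y * a) from (sub_sub_cancel _ _).symm]
    exact sub_mem h1 h2
  | algebraMap r =>
    intro y hy
    rw [← Algebra.commutes r y]
    exact Submodule.subset_span ⟨algebraMap ℂ U r, algebraMap_mem _ r, y, hy, rfl⟩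
  | add u v hu hv ihu ihv =>
    intro y hy
    rw [mul_add]
    exact add_mem (ihu y hy) (ihv y hy)
  | mul u v hu hv ihu ihv =>
    intro y hy
    rw [← mul_assoc]
    have key : ∀ z ∈ oddRight g0 g1, z * v ∈ oddRight g0 g1 := by
      intro z hz
      induction hz using Submodule.span_induction with
      | mem z hz =>
        obtain ⟨u0', hu0', y', hy', rfl⟩ := hz
        rw [mul_assoc]
        exact even_mul_oddRight g0 g1 hu0' (ihv y' hy')
      | zero => simp
      | add a b _ _ ha hb => rw [add_mul]; exact add_mem ha hb
      | smul c a _ ha => rw [smul_mul_assoc]; exact Submodule.smul_mem _ _ ha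
    exact key _ (ihu y hy)

end Aux

section Key

variable {U : Type*} [Ring U] [Algebra ℂ U] {I : Type*} [LinearOrder I]

lemma key_lemma (g0 g1 : Submodule ℂ U) (x : I → U)
    (h01 : ∀ a ∈ g0, ∀ b ∈ g1, a * b - b * a ∈ g1)
    (h11 : ∀ a ∈ g1, ∀ b ∈ g1, a * b + b * a ∈ g0)
    (hx : ∀ i, x i ∈ g1) (hxspan : Submodule.span ℂ (Set.range x) = g1) :
    ∀ k : ℕ,
      (∀ J : Finset I, J.card ≤ k → ∀ i ∉ J, ∃ ε : ℂ, (ε = 1 ∨ ε = -1) ∧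
        x i * xprod x J - ε • xprod x (insert i J) ∈ oddFil g0 x J.card) ∧
      (∀ J : Finset I, J.card ≤ k → ∀ i ∈ J, x i * xprod x J ∈ oddFil g0 x (J.card - 1)) ∧
      (∀ z ∈ oddFil g0 x k, ∀ y ∈ g1, y * z ∈ oddFil g0 x (k + 1)) := by
  intro k
  induction k using Nat.strong_induction_on with
  | _ k IH =>
  have K1 : ∀ J : Finset I, J.card ≤ k → ∀ i ∉ J, ∃ ε : ℂ, (ε = 1 ∨ ε = -1) ∧
      x i * xprod x J - ε • xprod x (insert i J) ∈ oddFil g0 x J.card := by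
    intro J hJk i hiJ
    rcases J.eq_empty_or_nonempty with rfl | hne
    · refine ⟨1, Or.inl rfl, ?_⟩
      rw [xprod_insert x (by simp) (by simp), one_smul, sub_self]
      exact zero_mem _
    · set j0 := J.min' hne with hj0
      have hj0J : j0 ∈ J := J.min'_mem hne
      set J' := J.erase j0 with hJ'def
      have hcardJ' : J'.card = J.card - 1 := Finset.card_erase_of_mem hj0J
      have hJpos : 1 ≤ J.card := Finset.card_pos.mpr hne
      have hpeel : xprod x J = x j0 * xprod x J' := xprod_peel x hne
      rcases lt_or_ge i j0 with hlt | hge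
      · have hforall : ∀ j ∈ J, i ≤ j := fun j hj => le_of_lt (lt_of_lt_of_le hlt (J.min'_le j hj))
        refine ⟨1, Or.inl rfl, ?_⟩
        rw [xprod_insert x hforall hiJ, one_smul, sub_self]
        exact zero_mem _
      · have hne' : j0 ≠ i := fun h => hiJ (h ▸ hj0J)
        have hj0i : j0 < i := lt_of_le_of_ne hge hne'
        obtain ⟨K1', K2', K3'⟩ := IH (J.card - 1) (by omega)
        have hiJ' : i ∉ J' := fun h => hiJ (Finset.mem_of_mem_erase h)
        obtain ⟨ε', hsign', hr'⟩ := K1' J' (by omega) i hiJ'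
        set c := x i * x j0 + x j0 * x i with hc
        have hcg0 : c ∈ g0 := h11 _ (hx i) _ (hx j0)
        have hins : x j0 * xprod x (insert i J') = xprod x (insert i J) := by
          have h1 : ∀ j ∈ insert i J', j0 ≤ j := by
            intro j hj
            rcases Finset.mem_insert.mp hj with rfl | hj
            · exact le_of_lt hj0i
            · exact J.min'_le j (Finset.mem_of_mem_erase hj)
          have h2 : j0 ∉ insert i J' := by
            simp only [Finset.mem_insert]
            rintro (rfl | h)
            · exact hne' rfl
            · exact Finset.notMem_erase _ _ h
          rw [← xprod_insert x h1 h2, Finset.insert_comm, Finset.insert_erase hj0J]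
        refine ⟨-ε', (by rcases hsign' with h | h <;> simp [h]), ?_⟩
        have hmain : x i * xprod x J - (-ε') • xprod x (insert i J)
            = c * xprod x J' - x j0 * (x i * xprod x J' - ε' • xprod x (insert i J')) := by
          rw [hpeel, ← hins, hc]
          simp only [mul_sub, mul_add, add_mul, sub_mul, mul_assoc, mul_smul_comm, smul_sub,
            neg_smul]
          abel
        rw [hmain]
        refine sub_mem ?_ ?_
        · exact mul_xprod_mem_oddFil g0 x (g0_mem_evenEnv hcg0)
            (show J'.card ≤ J.card by omega)
        · rw [hcardJ'] at hr'
          have h2 := K3' _ hr' (x j0) (hx j0)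
          have h3 : J.card - 1 + 1 = J.card := by omega
          rwa [h3] at h2
  have K2 : ∀ J : Finset I, J.card ≤ k → ∀ i ∈ J, x i * xprod x J ∈ oddFil g0 x (J.card - 1) := by
    intro J hJk i hiJ
    have hne : J.Nonempty := ⟨i, hiJ⟩
    set j0 := J.min' hne with hj0
    have hj0J : j0 ∈ J := J.min'_mem hne
    set J' := J.erase j0 with hJ'def
    have hcardJ' : J'.card = J.card - 1 := Finset.card_erase_of_mem hj0J
    have hJpos : 1 ≤ J.card := Finset.card_pos.mpr hne
    have hpeel : xprod x J = x j0 * xprod x J' := xprod_peel x hne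
    obtain ⟨K1', K2', K3'⟩ := IH (J.card - 1) (by omega)
    by_cases hij : i = j0
    · have hsq : x j0 * x j0 ∈ evenEnv g0 := by
        have h2 : x j0 * x j0 + x j0 * x j0 ∈ g0 := h11 _ (hx j0) _ (hx j0)
        have h3 : x j0 * x j0 = (2⁻¹ : ℂ) • (x j0 * x j0 + x j0 * x j0) := by
          rw [← two_smul ℂ, smul_smul]; norm_num
        rw [h3]
        exact Subalgebra.smul_mem _ (g0_mem_evenEnv h2) _
      rw [hij, hpeel, ← mul_assoc]
      exact mul_xprod_mem_oddFil g0 x hsq (show J'.card ≤ J.card - 1 by omega)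
    · have hiJ' : i ∈ J' := Finset.mem_erase.mpr ⟨hij, hiJ⟩
      have hcard2 : 2 ≤ J.card := Finset.one_lt_card.mpr ⟨i, hiJ, j0, hj0J, hij⟩
      have hJ'pos : 1 ≤ J'.card := Finset.card_pos.mpr ⟨i, hiJ'⟩
      set c := x i * x j0 + x j0 * x i with hc
      have hcg0 : c ∈ g0 := h11 _ (hx i) _ (hx j0)
      have hid : x i * xprod x J = c * xprod x J' - x j0 * (x i * xprod x J') := by
        rw [hpeel, hc]
        simp only [add_mul, mul_assoc, sub_mul, mul_sub]
        abel
      rw [hid]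
      refine sub_mem ?_ ?_
      · exact mul_xprod_mem_oddFil g0 x (g0_mem_evenEnv hcg0)
            (show J'.card ≤ J.card - 1 by omega)
      · obtain ⟨_, _, K3''⟩ := IH (J'.card - 1) (by omega)
        have h1 : x i * xprod x J' ∈ oddFil g0 x (J'.card - 1) := K2' J' (by omega) i hiJ'
        have h2 := K3'' _ h1 (x j0) (hx j0)
        have h3 : J'.card - 1 + 1 = J.card - 1 := by omega
        rwa [h3] at h2
  have step1 : ∀ (J : Finset I), J.card ≤ k → ∀ i, x i * xprod x J ∈ oddFil g0 x (J.card + 1) := by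
    intro J hJ i
    by_cases hiJ : i ∈ J
    · exact oddFil_mono g0 x (by omega) (K2 J hJ i hiJ)
    · obtain ⟨ε, hsign, hr⟩ := K1 J hJ i hiJ
      have h0 : x i * xprod x J
          = (x i * xprod x J - ε • xprod x (insert i J)) + ε • xprod x (insert i J) := by abel
      rw [h0]
      refine add_mem (oddFil_mono g0 x (by omega) hr)
        (Submodule.smul_mem _ _ (xprod_mem_oddFil g0 x ?_))
      rw [Finset.card_insert_of_notMem hiJ]
  have step2 : ∀ y ∈ g1, ∀ (J : Finset I), J.card ≤ k →
      y * xprod x J ∈ oddFil g0 x (J.card + 1) := by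
    intro y hy J hJ
    rw [← hxspan] at hy
    induction hy using Submodule.span_induction with
    | mem z hz => obtain ⟨i, rfl⟩ := hz; exact step1 J hJ i
    | zero => rw [zero_mul]; exact zero_mem _
    | add a b _ _ ha hb => rw [add_mul]; exact add_mem ha hb
    | smul c a _ ha => rw [smul_mul_assoc]; exact Submodule.smul_mem _ _ ha
  refine ⟨K1, K2, ?_⟩
  intro z hz y hy
  induction hz using Submodule.span_induction with
  | mem z hz =>
    obtain ⟨u0, hu0, J, hJ, rfl⟩ := hz
    rw [← mul_assoc]
    have hyu0 : y * u0 ∈ oddRight g0 g1 := odd_mul_even g0 g1 h01 hu0 y hy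
    have key : ∀ w ∈ oddRight g0 g1, w * xprod x J ∈ oddFil g0 x (k + 1) := by
      intro w hw
      induction hw using Submodule.span_induction with
      | mem z hz =>
        obtain ⟨u0', hu0', y', hy', rfl⟩ := hz
        rw [mul_assoc]
        exact even_mul_oddFil g0 x hu0' (oddFil_mono g0 x (by omega) (step2 y' hy' J hJ))
      | zero => rw [zero_mul]; exact zero_mem _
      | add a b _ _ ha hb => rw [add_mul]; exact add_mem ha hb
      | smul c a _ ha => rw [smul_mul_assoc]; exact Submodule.smul_mem _ _ ha
    exact key _ hyu0
  | zero => rw [mul_zero]; exact zero_mem _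
  | add a b _ _ ha hb => rw [mul_add]; exact add_mem ha hb
  | smul c a _ ha => rw [mul_smul_comm]; exact Submodule.smul_mem _ _ ha

end Key

section ListLemma

variable {U : Type*} [Ring U] [Algebra ℂ U] {I : Type*} [LinearOrder I]

lemma xprod_singleton (x : I → U) (a : I) : xprod x ({a} : Finset I) = x a := by
  rw [show ({a} : Finset I) = insert a ∅ from rfl, xprod_insert x (by simp) (by simp),
    xprod_empty, mul_one]

lemma list_prod_lemma (g0 g1 : Submodule ℂ U) (x : I → U)
    (h01 : ∀ a ∈ g0, ∀ b ∈ g1, a * b - b * a ∈ g1)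
    (h11 : ∀ a ∈ g1, ∀ b ∈ g1, a * b + b * a ∈ g0)
    (hx : ∀ i, x i ∈ g1) (hxspan : Submodule.span ℂ (Set.range x) = g1) :
    ∀ L : List I,
      (¬ L.Nodup → (L.map x).prod ∈ oddFil g0 x (L.length - 1)) ∧
      (L.Nodup → ∃ ε : ℂ, (ε = 1 ∨ ε = -1) ∧
        (L.map x).prod - ε • xprod x L.toFinset ∈ oddFil g0 x (L.length - 1)) := by
  intro L
  induction L with
  | nil =>
    refine ⟨fun h => absurd List.nodup_nil h, fun _ => ⟨1, Or.inl rfl, ?_⟩⟩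
    simp only [List.map_nil, List.prod_nil, List.toFinset_nil, xprod_empty, one_smul, sub_self,
      List.length_nil]
    exact zero_mem _
  | cons a L' ih =>
    obtain ⟨iha, ihb⟩ := ih
    have hK := key_lemma g0 g1 x h01 h11 hx hxspan
    have hprod : ((a :: L').map x).prod = x a * (L'.map x).prod := by simp
    constructor
    · intro hnd
      simp only [List.length_cons, Nat.add_sub_cancel]
      have hL'ne : L' ≠ [] := by
        rintro rfl
        exact hnd (by simp)
      have hlen1 : 1 ≤ L'.length := List.length_pos_iff.mpr hL'ne
      by_cases hnd' : L'.Nodup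
      · have haL' : a ∈ L' := by
          by_contra hmem
          exact hnd (List.nodup_cons.mpr ⟨hmem, hnd'⟩)
        obtain ⟨ε', hs', hr'⟩ := ihb hnd'
        have hTcard : L'.toFinset.card = L'.length := List.toFinset_card_of_nodup hnd'
        have haT : a ∈ L'.toFinset := List.mem_toFinset.mpr haL'
        obtain ⟨_, K2, _⟩ := hK L'.toFinset.card
        have h1 : x a * xprod x L'.toFinset ∈ oddFil g0 x (L'.toFinset.card - 1) :=
          K2 _ le_rfl a haT
        have hid : ((a :: L').map x).prod
            = ε' • (x a * xprod x L'.toFinset)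
              + x a * ((L'.map x).prod - ε' • xprod x L'.toFinset) := by
          rw [hprod]
          simp only [mul_sub, mul_smul_comm]
          abel
        rw [hid]
        refine add_mem (Submodule.smul_mem _ _ ?_) ?_
        · exact oddFil_mono g0 x (by omega) h1
        · obtain ⟨_, _, K3'⟩ := hK (L'.length - 1)
          have h2 := K3' _ hr' (x a) (hx a)
          exact oddFil_mono g0 x (by omega) h2
      · have h1 := iha hnd'
        obtain ⟨_, _, K3'⟩ := hK (L'.length - 1)
        have h2 := K3' _ h1 (x a) (hx a)
        rw [hprod]
        exact oddFil_mono g0 x (by omega) h2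
    · intro hnd
      obtain ⟨haL', hnd'⟩ := List.nodup_cons.mp hnd
      by_cases hL' : L' = []
      · subst hL'
        refine ⟨1, Or.inl rfl, ?_⟩
        simp only [List.map_cons, List.map_nil, List.prod_cons, List.prod_nil, mul_one,
          List.toFinset_cons, List.toFinset_nil, insert_empty_eq, xprod_singleton, one_smul,
          sub_self, List.length_cons, List.length_nil]
        exact zero_mem _
      · have hlen1 : 1 ≤ L'.length := List.length_pos_iff.mpr hL'
        obtain ⟨ε', hs', hr'⟩ := ihb hnd'
        have hTcard : L'.toFinset.card = L'.length := List.toFinset_card_of_nodup hnd'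
        have haT : a ∉ L'.toFinset := fun h => haL' (List.mem_toFinset.mp h)
        obtain ⟨K1, _, _⟩ := hK L'.toFinset.card
        obtain ⟨ε'', hs'', hr''⟩ := K1 _ le_rfl a haT
        refine ⟨ε' * ε'', ?_, ?_⟩
        · rcases hs' with h | h <;> rcases hs'' with h2 | h2 <;> simp [h, h2]
        · simp only [List.length_cons, Nat.add_sub_cancel, List.toFinset_cons]
          have hid : ((a :: L').map x).prod - (ε' * ε'') • xprod x (insert a L'.toFinset)
              = ε' • (x a * xprod x L'.toFinset - ε'' • xprod x (insert a L'.toFinset))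
                + x a * ((L'.map x).prod - ε' • xprod x L'.toFinset) := by
            rw [hprod]
            simp only [mul_sub, mul_smul_comm, smul_sub, smul_smul]
            abel
          rw [hid]
          refine add_mem (Submodule.smul_mem _ _ ?_) ?_
          · exact oddFil_mono g0 x (by omega) hr''
          · obtain ⟨_, _, K3'⟩ := hK (L'.length - 1)
            have h2 := K3' _ hr' (x a) (hx a)
            exact oddFil_mono g0 x (by omega) h2

lemma xprod_mul_lemma (g0 g1 : Submodule ℂ U) (x : I → U)
    (h01 : ∀ a ∈ g0, ∀ b ∈ g1, a * b - b * a ∈ g1)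
    (h11 : ∀ a ∈ g1, ∀ b ∈ g1, a * b + b * a ∈ g0)
    (hx : ∀ i, x i ∈ g1) (hxspan : Submodule.span ℂ (Set.range x) = g1) (A B : Finset I) :
    (Disjoint A B → ∃ ε : ℂ, (ε = 1 ∨ ε = -1) ∧
      xprod x A * xprod x B - ε • xprod x (A ∪ B) ∈ oddFil g0 x (A.card + B.card - 1)) ∧
    (¬ Disjoint A B → xprod x A * xprod x B ∈ oddFil g0 x (A.card + B.card - 1)) := by
  set L := A.sort (· ≤ ·) ++ B.sort (· ≤ ·) with hL
  have hprod : (L.map x).prod = xprod x A * xprod x B := by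
    rw [hL, List.map_append, List.prod_append]; rfl
  have hlen : L.length = A.card + B.card := by
    simp [hL]
  have htf : L.toFinset = A ∪ B := by
    simp [hL]
  have hnd : L.Nodup ↔ Disjoint A B := by
    rw [hL, List.nodup_append]
    constructor
    · rintro ⟨-, -, hdis⟩
      rw [Finset.disjoint_left]
      intro a haA haB
      exact hdis a ((Finset.mem_sort _).mpr haA) a ((Finset.mem_sort _).mpr haB) rfl
    · intro hdis
      refine ⟨Finset.sort_nodup _ _, Finset.sort_nodup _ _, ?_⟩
      intro a haA b haB hab
      subst hab
      exact Finset.disjoint_left.mp hdis ((Finset.mem_sort _).mp haA) ((Finset.mem_sort _).mp haB)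
  obtain ⟨ha, hb⟩ := list_prod_lemma g0 g1 x h01 h11 hx hxspan L
  constructor
  · intro hdis
    obtain ⟨ε, hs, hr⟩ := hb (hnd.mpr hdis)
    exact ⟨ε, hs, by rwa [hprod, htf, hlen] at hr⟩
  · intro hdis
    have h1 := ha (fun h => hdis (hnd.mp h))
    rwa [hprod, hlen] at h1

end ListLemma

/-- With `ι` the `U(g₀)`-bimodule projection of STATEMENT 12 and the
pairing `(u|u') = ι(uu')`, for every subset `J ⊆ I` there exist `u_J, v_J ∈ U(g)`
such that `(u_J | x_{J'}) = δ_{J,J'}` and `(x_{J'} | v_J) = δ_{J,J'}` for all `J' ⊆ I`. -/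
theorem pairing_dual_elements
    {U : Type*} [Ring U] [Algebra ℂ U]
    (𝒜 : ZMod 2 → Submodule ℂ U) [GradedAlgebra 𝒜]
    (g0 g1 : Submodule ℂ U) (hg0 : g0 ≤ 𝒜 0) (hg1 : g1 ≤ 𝒜 1)
    (h00 : ∀ a ∈ g0, ∀ b ∈ g0, a * b - b * a ∈ g0)
    (h01 : ∀ a ∈ g0, ∀ b ∈ g1, a * b - b * a ∈ g1)
    (h11 : ∀ a ∈ g1, ∀ b ∈ g1, a * b + b * a ∈ g0)
    (hgen : Algebra.adjoin ℂ ((g0 : Set U) ∪ (g1 : Set U)) = ⊤)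
    {I : Type*} [LinearOrder I] (x : I → U)
    (hx : ∀ i, x i ∈ g1) (hxind : LinearIndependent ℂ x)
    (hxspan : Submodule.span ℂ (Set.range x) = g1)
    (hfree : ∀ u : U, ∃ c : Finset I →₀ U, (∀ J, c J ∈ evenEnv g0) ∧
      u = c.sum fun J uJ => uJ * xprod x J)
    (hind : ∀ c : Finset I →₀ U, (∀ J, c J ∈ evenEnv g0) →
      (c.sum fun J uJ => uJ * xprod x J) = 0 → c = 0)
    [Fintype I]
    (htop : ∀ y ∈ g0, y * xprod x Finset.univ - xprod x Finset.univ * y ∈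
      oddFil g0 x (Fintype.card I - 1))
    (ι : U →ₗ[ℂ] U)
    (hιmem : ∀ u : U, ι u ∈ evenEnv g0)
    (hιleft : ∀ u0 ∈ evenEnv g0, ∀ u : U, ι (u0 * u) = u0 * ι u)
    (hιright : ∀ u0 ∈ evenEnv g0, ∀ u : U, ι (u * u0) = ι u * u0)
    (hιker : ∀ u : U, ι u = 0 ↔ u ∈ oddFil g0 x (Fintype.card I - 1))
    (hιtop : ι (xprod x Finset.univ) = 1) :
    ∀ J : Finset I,
      (∃ uJ : U, ∀ J' : Finset I,
        ι (uJ * xprod x J') = if J = J' then 1 else 0) ∧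
      (∃ vJ : U, ∀ J' : Finset I,
        ι (xprod x J' * vJ) = if J = J' then 1 else 0) := by
  set n := Fintype.card I with hn
  have hK := xprod_mul_lemma g0 g1 x h01 h11 hx hxspan
  have hker : ∀ u : U, u ∈ oddFil g0 x (n - 1) → ι u = 0 := fun u h => (hιker u).mpr h
  have hcardle : ∀ K : Finset I, K.card ≤ n := fun K => by
    simpa [hn, Finset.card_univ] using K.card_le_univ
  have hxK0 : ∀ K : Finset I, K ≠ Finset.univ → ι (xprod x K) = 0 := by
    intro K hK'
    apply hker
    apply xprod_mem_oddFil
    have h1 : K.card < Finset.univ.card := Finset.card_lt_card (Finset.ssubset_univ_iff.mpr hK')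
    rw [Finset.card_univ, ← hn] at h1
    omega
  have hval0 : ∀ A B : Finset I, A.card + B.card < n → ι (xprod x A * xprod x B) = 0 := by
    intro A B hAB
    by_cases hdis : Disjoint A B
    · obtain ⟨ε, hs, hr⟩ := (hK A B).1 hdis
      have h1 : ι (xprod x A * xprod x B - ε • xprod x (A ∪ B)) = 0 :=
        hker _ (oddFil_mono g0 x (by omega) hr)
      rw [map_sub, map_smul] at h1
      have h2 : ι (xprod x (A ∪ B)) = 0 := by
        apply hxK0
        intro hEq
        have hc := Finset.card_union_le A B
        rw [hEq, Finset.card_univ, ← hn] at hc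
        omega
      rwa [h2, smul_zero, sub_zero] at h1
    · exact hker _ (oddFil_mono g0 x (by omega) ((hK A B).2 hdis))
  have hval_over : ∀ A B : Finset I, ¬ Disjoint A B → A.card + B.card ≤ n →
      ι (xprod x A * xprod x B) = 0 := by
    intro A B hdis hle
    exact hker _ (oddFil_mono g0 x (by omega) ((hK A B).2 hdis))
  have hval_top : ∀ A B : Finset I, Disjoint A B → A ∪ B = Finset.univ →
      ∃ ε : ℂ, (ε = 1 ∨ ε = -1) ∧ ι (xprod x A * xprod x B) = ε • (1 : U) := by
    intro A B hdis hU
    obtain ⟨ε, hs, hr⟩ := (hK A B).1 hdis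
    have hsum : A.card + B.card = n := by
      have hc := Finset.card_union_of_disjoint hdis
      rw [hU, Finset.card_univ, ← hn] at hc
      omega
    have h1 : ι (xprod x A * xprod x B - ε • xprod x (A ∪ B)) = 0 :=
      hker _ (oddFil_mono g0 x (by omega) hr)
    rw [map_sub, map_smul, hU, hιtop] at h1
    exact ⟨ε, hs, sub_eq_zero.mp h1⟩
  have hwfact : ∀ J J' : Finset I, J'.card ≤ J.card → J' ≠ J →
      ι (xprod x Jᶜ * xprod x J') = 0 ∧ ι (xprod x J' * xprod x Jᶜ) = 0 := by
    intro J J' hle hne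
    have hcompl : Jᶜ.card = n - J.card := by rw [Finset.card_compl, hn]
    have hJn := hcardle J
    by_cases hcard : J'.card = J.card
    · have hsub : ¬ J' ⊆ J := by
        intro hsub
        exact hne (Finset.eq_of_subset_of_card_le hsub (by omega))
      obtain ⟨i, hiJ', hiJ⟩ := Finset.not_subset.mp hsub
      have hnd1 : ¬ Disjoint (Jᶜ) J' := by
        rw [Finset.disjoint_left]
        push_neg
        exact ⟨i, Finset.mem_compl.mpr hiJ, hiJ'⟩
      have hnd2 : ¬ Disjoint J' (Jᶜ) := fun h => hnd1 h.symm
      exact ⟨hval_over _ _ hnd1 (by omega), hval_over _ _ hnd2 (by omega)⟩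
    · exact ⟨hval0 _ _ (by omega), hval0 _ _ (by omega)⟩
  suffices h : ∀ m : ℕ, ∀ J : Finset I, n - J.card ≤ m →
      (∃ uJ : U, ∀ J' : Finset I,
        ι (uJ * xprod x J') = if J = J' then 1 else 0) ∧
      (∃ vJ : U, ∀ J' : Finset I,
        ι (xprod x J' * vJ) = if J = J' then 1 else 0) by
    intro J
    exact h n J (by omega)
  intro m
  induction m using Nat.strong_induction_on with
  | _ m IHm =>
  intro J hJm
  have hJn := hcardle J
  have IHu : ∀ K : Finset I, J.card < K.card →
      ∃ uK : U, ∀ J' : Finset I, ι (uK * xprod x J') = if K = J' then 1 else 0 := by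
    intro K hK'
    have hKn := hcardle K
    exact (IHm (m - 1) (by omega) K (by omega)).1
  have IHv : ∀ K : Finset I, J.card < K.card →
      ∃ vK : U, ∀ J' : Finset I, ι (xprod x J' * vK) = if K = J' then 1 else 0 := by
    intro K hK'
    have hKn := hcardle K
    exact (IHm (m - 1) (by omega) K (by omega)).2
  choose! uK huK using IHu
  choose! vK hvK using IHv
  set S : Finset (Finset I) := Finset.univ.filter (fun K => J.card < K.card) with hS
  have hprop : ∀ K, K ∈ S ↔ J.card < K.card := by
    intro K; simp [hS]
  have hcup : Jᶜ ∪ J = Finset.univ := by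
    ext i; simp; tauto
  have hcup' : J ∪ Jᶜ = Finset.univ := by
    ext i
    simp only [Finset.mem_union, Finset.mem_compl, Finset.mem_univ, iff_true]
    tauto
  constructor
  · -- left dual
    obtain ⟨ε₀, hε₀s, hε₀⟩ := hval_top (Jᶜ) J disjoint_compl_left hcup
    set w := ε₀ • xprod x (Jᶜ) with hw
    have hww : ∀ J' : Finset I, ι (w * xprod x J') = ε₀ • ι (xprod x Jᶜ * xprod x J') := by
      intro J'; rw [hw, smul_mul_assoc, map_smul]
    have hwJ : ι (w * xprod x J) = 1 := by
      rw [hww, hε₀, smul_smul]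
      rcases hε₀s with h | h <;> norm_num [h]
    have hwlow : ∀ J' : Finset I, J'.card ≤ J.card → J' ≠ J → ι (w * xprod x J') = 0 := by
      intro J' h1 h2
      rw [hww, (hwfact J J' h1 h2).1, smul_zero]
    refine ⟨w - ∑ K ∈ S, ι (w * xprod x K) * uK K, ?_⟩
    intro J'
    have hterm : ∀ K ∈ S, ι ((ι (w * xprod x K) * uK K) * xprod x J')
        = ι (w * xprod x K) * (if K = J' then 1 else 0) := by
      intro K hKS
      rw [mul_assoc, hιleft _ (hιmem _) _, huK K ((hprop K).mp hKS) J']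
    rw [sub_mul, Finset.sum_mul, map_sub, map_sum, Finset.sum_congr rfl hterm]
    have hsum : ∑ K ∈ S, ι (w * xprod x K) * (if K = J' then 1 else 0)
        = if J' ∈ S then ι (w * xprod x J') else 0 := by
      rw [Finset.sum_congr rfl (fun K _ => by rw [mul_ite, mul_one, mul_zero])]
      exact Finset.sum_ite_eq' S J' (fun K => ι (w * xprod x K))
    rw [hsum]
    by_cases hJ' : J' ∈ S
    · have hgt : J.card < J'.card := (hprop J').mp hJ'
      rw [if_pos hJ', sub_self, if_neg (fun h => by rw [h] at hgt; omega)]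
    · rw [if_neg hJ', sub_zero]
      have hle : J'.card ≤ J.card := by
        have := (hprop J').not.mp hJ'
        omega
      by_cases hEq : J = J'
      · rw [if_pos hEq, ← hEq]
        exact hwJ
      · rw [if_neg hEq]
        exact hwlow J' hle (fun h => hEq h.symm)
  · -- right dual
    obtain ⟨ε₁, hε₁s, hε₁⟩ := hval_top J (Jᶜ) disjoint_compl_right hcup'
    set w' := ε₁ • xprod x (Jᶜ) with hw'
    have hw'w : ∀ J' : Finset I, ι (xprod x J' * w') = ε₁ • ι (xprod x J' * xprod x Jᶜ) := by
      intro J'; rw [hw', mul_smul_comm, map_smul]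
    have hw'J : ι (xprod x J * w') = 1 := by
      rw [hw'w, hε₁, smul_smul]
      rcases hε₁s with h | h <;> norm_num [h]
    have hw'low : ∀ J' : Finset I, J'.card ≤ J.card → J' ≠ J → ι (xprod x J' * w') = 0 := by
      intro J' h1 h2
      rw [hw'w, (hwfact J J' h1 h2).2, smul_zero]
    refine ⟨w' - ∑ K ∈ S, vK K * ι (xprod x K * w'), ?_⟩
    intro J'
    have hterm : ∀ K ∈ S, ι (xprod x J' * (vK K * ι (xprod x K * w')))
        = (if K = J' then 1 else 0) * ι (xprod x K * w') := by
      intro K hKS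
      rw [← mul_assoc, hιright _ (hιmem _) _, hvK K ((hprop K).mp hKS) J']
    rw [mul_sub, Finset.mul_sum, map_sub, map_sum, Finset.sum_congr rfl hterm]
    have hsum : ∑ K ∈ S, (if K = J' then 1 else 0) * ι (xprod x K * w')
        = if J' ∈ S then ι (xprod x J' * w') else 0 := by
      rw [Finset.sum_congr rfl (fun K _ => by rw [ite_mul, one_mul, zero_mul])]
      exact Finset.sum_ite_eq' S J' (fun K => ι (xprod x K * w'))
    rw [hsum]
    by_cases hJ' : J' ∈ S
    · have hgt : J.card < J'.card := (hprop J').mp hJ'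
      rw [if_pos hJ', sub_self, if_neg (fun h => by rw [h] at hgt; omega)]
    · rw [if_neg hJ', sub_zero]
      have hle : J'.card ≤ J.card := by
        have := (hprop J').not.mp hJ'
        omega
      by_cases hEq : J = J'
      · rw [if_pos hEq, ← hEq]
        exact hw'J
      · rw [if_neg hEq]
        exact hw'low J' hle (fun h => hEq h.symm)

end
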